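/- Let p(x) = Π_{i=1}^n (x−x_i) and q(x) = Π_{i=1}^n (x−y_i) with all x_i, y_i distinct, and let v(x) = p(x)/(x−x_j) for fixed j. Let ā = (1, a_1, ..., a_n)^T satisfy T(ā)c̄ = d̄ where c̄, d̄ are the reversed coefficient vectors of p and q. Then Σ_{i=1}^n v_i a_i = q(x_j), where v_1,...,v_n are the coefficients of v. In particular this sum is nonzero since x_j ≠ y_i for all i. -/

import Mathlib

open Matrix Finset

/-- Lower triangular Toeplitz matrix generated by a vector. -/
def LTT {n : ℕ} (x : Fin n → ℝ) : Matrix (Fin n) (Fin n) ℝ :=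
  Matrix.of fun i j =>
    if h : (j : ℕ) ≤ (i : ℕ) then
      x ⟨(i : ℕ) - (j : ℕ), Nat.lt_of_le_of_lt (Nat.sub_le _ _) i.isLt⟩
    else 0

/-- The diagonal matrix diag(0,1,...,n-1). -/
def Lam (n : ℕ) : Matrix (Fin n) (Fin n) ℝ :=
  Matrix.diagonal fun i => (i : ℝ)

theorem eigenvector_sum_eq_q {n : ℕ} (x y : Fin n → ℝ)
    (hdist : Function.Injective (Sum.elim x y))
    (cc dd : ℕ → ℝ)
    (hp : ∀ t : ℝ, ∏ i, (t - x i) = ∑ i ∈ Finset.range (n + 1), cc i * t ^ i)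
    (hq : ∀ t : ℝ, ∏ i, (t - y i) = ∑ i ∈ Finset.range (n + 1), dd i * t ^ i)
    (j : Fin n) (v : ℕ → ℝ)
    (hfac : ∀ t : ℝ, ∑ i ∈ Finset.range (n + 1), cc i * t ^ i =
      (t - x j) * ∑ i ∈ Finset.range n, v (i + 1) * t ^ i)
    (abar : Fin (n + 1) → ℝ) (habar0 : abar 0 = 1)
    (cbar dbar : Fin (n + 1) → ℝ)
    (hcbar : ∀ i : Fin (n + 1), cbar i = cc (n - (i : ℕ)))
    (hdbar : ∀ i : Fin (n + 1), dbar i = dd (n - (i : ℕ)))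
    (hTa : LTT abar *ᵥ cbar = dbar) :
    (∑ i : Fin n, v ((i : ℕ) + 1) * abar i.succ) = ∏ i, (x j - y i) ∧
    (∑ i : Fin n, v ((i : ℕ) + 1) * abar i.succ) ≠ 0 := by
  have hn : 0 < n := j.pos
  set P : Polynomial ℝ := ∑ i ∈ Finset.range (n + 1), Polynomial.C (cc i) * Polynomial.X ^ i
    with hP
  set V : Polynomial ℝ := ∑ i ∈ Finset.range n, Polynomial.C (v (i + 1)) * Polynomial.X ^ i
    with hV
  have hPV : P = (Polynomial.X - Polynomial.C (x j)) * V := by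
    apply Polynomial.funext
    intro t
    simpa [hP, hV, Polynomial.eval_finset_sum] using hfac t
  have hPcoeff : ∀ m, P.coeff m = if m ≤ n then cc m else 0 := by
    intro m
    simp only [hP, Polynomial.finset_sum_coeff, Polynomial.coeff_C_mul, Polynomial.coeff_X_pow,
      mul_ite, mul_one, mul_zero, Finset.sum_ite_eq, Finset.mem_range, Nat.lt_succ_iff]
  have hVcoeff : ∀ m, V.coeff m = if m < n then v (m + 1) else 0 := by
    intro m
    simp only [hV, Polynomial.finset_sum_coeff, Polynomial.coeff_C_mul, Polynomial.coeff_X_pow,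
      mul_ite, mul_one, mul_zero, Finset.sum_ite_eq, Finset.mem_range]
  have hrel : ∀ m : ℕ, (if m ≤ n then cc m else 0)
      = (if m = 0 then 0 else (if m - 1 < n then v (m - 1 + 1) else 0))
        - x j * (if m < n then v (m + 1) else 0) := by
    intro m
    rw [← hPcoeff, ← hVcoeff, ← hVcoeff, hPV, sub_mul]
    rcases m with _ | k
    · simp [Polynomial.mul_coeff_zero]
    · simp [Polynomial.coeff_X_mul]
  set a : ℕ → ℝ := fun k => if h : k ≤ n then abar ⟨k, Nat.lt_succ_of_le h⟩ else 0 with ha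
  set w : ℕ → ℝ := fun m => if m < n then v (n - m) else 0 with hw
  set c : ℕ → ℝ := fun i => if i ≤ n then cc (n - i) else 0 with hc
  -- value lemmas
  have haV : ∀ k (hk : k ≤ n), a k = abar ⟨k, Nat.lt_succ_of_le hk⟩ := by
    intro k hk
    simp only [ha]
    rw [dif_pos hk]
  have hcV : ∀ i, i ≤ n → c i = cc (n - i) := by
    intro i hi
    simp only [hc]
    rw [if_pos hi]
  have hcO : ∀ i, n < i → c i = 0 := by
    intro i hi
    simp only [hc]
    rw [if_neg (by omega)]
  have hwV : ∀ m, m < n → w m = v (n - m) := by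
    intro m hm
    simp only [hw]
    rw [if_pos hm]
  have hwO : ∀ m, n ≤ m → w m = 0 := by
    intro m hm
    simp only [hw]
    rw [if_neg (by omega)]
  have ha0 : a 0 = 1 := by
    rw [haV 0 (Nat.zero_le n), Fin.mk_zero, habar0]
  -- Claim B : reversed p = (1 - x_j t) * reversed v, coefficientwise
  have hBc : ∀ i : ℕ, c i = w i - x j * (if i = 0 then 0 else w (i - 1)) := by
    intro i
    by_cases hi0 : i = 0
    · rw [if_pos hi0, mul_zero, sub_zero, hi0, hcV 0 (Nat.zero_le n), hwV 0 hn]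
      have h1 := hrel n
      rw [if_pos (le_refl n), if_neg hn.ne', if_pos (by omega : n - 1 < n),
        if_neg (lt_irrefl n), (by omega : n - 1 + 1 = n), mul_zero, sub_zero] at h1
      exact h1
    · by_cases hi : i ≤ n
      · rw [if_neg hi0]
        by_cases hin : i = n
        · rw [hin, hcV n (le_refl n), hwO n (le_refl n), hwV (n - 1) (by omega),
            Nat.sub_self, (by omega : n - (n - 1) = 1)]
          have h1 := hrel 0
          rw [if_pos (Nat.zero_le n), if_pos rfl, if_pos hn, Nat.zero_add] at h1
          exact h1
        · have h1 := hrel (n - i)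
          rw [if_pos (Nat.sub_le n i), if_neg (by omega : ¬ n - i = 0),
            if_pos (by omega : n - i - 1 < n), if_pos (by omega : n - i < n),
            (by omega : n - i - 1 + 1 = n - i)] at h1
          rw [hcV i hi, hwV i (by omega), hwV (i - 1) (by omega),
            (by omega : n - (i - 1) = n - i + 1), h1]
      · rw [if_neg hi0, hcO i (by omega), hwO i (by omega), hwO (i - 1) (by omega)]
        ring
  -- Claim A : the convolution identity from hTa
  have hA : ∀ m, m ≤ n → (∑ k ∈ Finset.range (m + 1), a k * c (m - k)) = dd (n - m) := by
    intro m hm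
    have h1 := congrFun hTa ⟨m, by omega⟩
    simp only [Matrix.mulVec, dotProduct] at h1
    rw [hdbar] at h1
    have h2 : ∀ i : Fin (n + 1), LTT abar ⟨m, by omega⟩ i * cbar i
        = (fun i : ℕ => (if i ≤ m then a (m - i) else 0) * c i) (i : ℕ) := by
      intro i
      show LTT abar ⟨m, by omega⟩ i * cbar i
        = (if (i : ℕ) ≤ m then a (m - (i : ℕ)) else 0) * c (i : ℕ)
      rw [hcbar, ← hcV (i : ℕ) (by omega)]
      show (if h : (i : ℕ) ≤ m then abar ⟨m - (i : ℕ), by omega⟩ else 0) * c (i : ℕ)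
        = (if (i : ℕ) ≤ m then a (m - (i : ℕ)) else 0) * c (i : ℕ)
      by_cases hI : (i : ℕ) ≤ m
      · rw [dif_pos hI, if_pos hI, haV (m - (i : ℕ)) (by omega)]
      · rw [dif_neg hI, if_neg hI]
    rw [Finset.sum_congr rfl (fun i _ => h2 i),
      Fin.sum_univ_eq_sum_range (fun i : ℕ => (if i ≤ m then a (m - i) else 0) * c i)
        (n + 1)] at h1
    have h3 : ∑ i ∈ Finset.range (m + 1), a (m - i) * c i
        = ∑ i ∈ Finset.range (n + 1), (if i ≤ m then a (m - i) else 0) * c i := by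
      rw [← Finset.sum_subset (Finset.range_subset_range.2 (by omega)
        : Finset.range (m + 1) ⊆ Finset.range (n + 1))]
      · apply Finset.sum_congr rfl
        intro i hi
        rw [if_pos (by simp only [Finset.mem_range] at hi; omega)]
      · intro i _ hi
        rw [if_neg (by simp only [Finset.mem_range] at hi ⊢; omega), zero_mul]
    rw [← h1, ← h3, ← Finset.sum_range_reflect (fun k => a k * c (m - k)) (m + 1)]
    apply Finset.sum_congr rfl
    intro i hi
    simp only [Finset.mem_range] at hi
    rw [(by omega : m + 1 - 1 - i = m - i), (by omega : m - (m - i) = i)]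
  -- Claim C : solving the recursion
  have hC : ∀ m, m ≤ n → (∑ k ∈ Finset.range (m + 1), a k * w (m - k))
      = ∑ k ∈ Finset.range (m + 1), x j ^ (m - k) * dd (n - k) := by
    intro m
    induction m with
    | zero =>
      intro _
      have h0 := hA 0 (Nat.zero_le n)
      simp only [zero_add, Finset.sum_range_one, Nat.sub_zero, Nat.sub_self, pow_zero,
        one_mul] at h0 ⊢
      rw [ha0, one_mul] at h0 ⊢
      rw [hBc 0, if_pos rfl, mul_zero, sub_zero] at h0
      exact h0
    | succ m ih =>
      intro hm1
      have hm : m ≤ n := by omega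
      have hAm := hA (m + 1) hm1
      have hterm : ∀ k ∈ Finset.range (m + 1 + 1), a k * c (m + 1 - k)
          = a k * w (m + 1 - k) - x j * (a k * (if k = m + 1 then 0 else w (m - k))) := by
        intro k hk
        simp only [Finset.mem_range] at hk
        rw [hBc (m + 1 - k)]
        by_cases hk1 : k = m + 1
        · rw [if_pos (by omega : m + 1 - k = 0), if_pos hk1]
          ring
        · rw [if_neg (by omega : ¬ m + 1 - k = 0), if_neg hk1,
            (by omega : m + 1 - k - 1 = m - k)]
          ring
      have h4 : ∑ k ∈ Finset.range (m + 1 + 1), a k * (if k = m + 1 then 0 else w (m - k))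
          = ∑ k ∈ Finset.range (m + 1), x j ^ (m - k) * dd (n - k) := by
        rw [Finset.sum_range_succ, if_pos rfl, mul_zero, add_zero, ← ih hm]
        apply Finset.sum_congr rfl
        intro k hk
        simp only [Finset.mem_range] at hk
        rw [if_neg (by omega : ¬ k = m + 1)]
      rw [Finset.sum_congr rfl hterm, Finset.sum_sub_distrib, ← Finset.mul_sum, h4] at hAm
      have h5 : ∑ k ∈ Finset.range (m + 1 + 1), a k * w (m + 1 - k)
          = dd (n - (m + 1)) + x j * ∑ k ∈ Finset.range (m + 1), x j ^ (m - k) * dd (n - k) := by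
        linarith [hAm]
      have h6 : ∑ k ∈ Finset.range (m + 1 + 1), x j ^ (m + 1 - k) * dd (n - k)
          = (∑ k ∈ Finset.range (m + 1), x j ^ (m + 1 - k) * dd (n - k)) + dd (n - (m + 1)) := by
        rw [Finset.sum_range_succ, Nat.sub_self, pow_zero, one_mul]
      rw [h5, h6, add_comm (dd (n - (m + 1))), Finset.mul_sum]
      congr 1
      apply Finset.sum_congr rfl
      intro k hk
      simp only [Finset.mem_range] at hk
      rw [(by omega : m + 1 - k = (m - k) + 1), pow_succ]
      ring
  -- Evaluate: e_n = q(x_j)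
  have hen : (∑ k ∈ Finset.range (n + 1), a k * w (n - k)) = ∏ i, (x j - y i) := by
    rw [hC n le_rfl]
    have hrefl := Finset.sum_range_reflect (fun i => x j ^ i * dd i) (n + 1)
    simp only [Nat.add_sub_cancel] at hrefl
    rw [hrefl, hq (x j)]
    apply Finset.sum_congr rfl
    intro i _
    ring
  -- The sum in question equals e_n
  have hS : (∑ i : Fin n, v ((i : ℕ) + 1) * abar i.succ)
      = ∑ k ∈ Finset.range (n + 1), a k * w (n - k) := by
    have h1 : ∀ i : Fin n, v ((i : ℕ) + 1) * abar i.succ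
        = (fun k : ℕ => v (k + 1) * a (k + 1)) (i : ℕ) := by
      intro i
      show v ((i : ℕ) + 1) * abar i.succ = v ((i : ℕ) + 1) * a ((i : ℕ) + 1)
      rw [haV ((i : ℕ) + 1) (by omega)]
      rfl
    rw [Finset.sum_congr rfl (fun i _ => h1 i),
      Fin.sum_univ_eq_sum_range (fun k : ℕ => v (k + 1) * a (k + 1)) n,
      Finset.sum_range_succ']
    have h2 : a 0 * w (n - 0) = 0 := by
      rw [Nat.sub_zero, hwO n (le_refl n), mul_zero]
    rw [h2, add_zero]
    apply Finset.sum_congr rfl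
    intro i hi
    simp only [Finset.mem_range] at hi
    show v (i + 1) * a (i + 1) = a (i + 1) * w (n - (i + 1))
    rw [hwV (n - (i + 1)) (by omega), (by omega : n - (n - (i + 1)) = i + 1)]
    ring
  have hfinal : (∑ i : Fin n, v ((i : ℕ) + 1) * abar i.succ) = ∏ i, (x j - y i) := by
    rw [hS, hen]
  refine ⟨hfinal, ?_⟩
  rw [hfinal]
  refine Finset.prod_ne_zero_iff.2 fun i _ h0 => ?_
  have hxy : x j = y i := by linarith
  have h2 : Sum.elim x y (Sum.inl j) = Sum.elim x y (Sum.inr i) := by simpa using hxy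
  exact absurd (hdist h2) (by simp)
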